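/- Let 𝒳 ⊆ ℝ be compact and let ω : 𝒳 → ℝ and h : 𝒳 → ℝ be continuous (h plays the role of g'). Assume the measure dominance condition: for every Borel set B ⊆ ℝ, −∫_{h⁻¹(B) ∩ 𝒳⁻} ω(v) dv ≤ ∫_{h⁻¹(B) ∩ 𝒳⁺} ω(v) dv. Then for every x ∈ 𝒳ₘ⁺ and every r > 0, setting B_r := h(𝒳 ∩ closedBall(x, r)) (a compact, hence Borel, set), if Leb(h⁻¹(B_r) ∩ 𝒳⁺) > 0 then 0 ≤ [∫_{h⁻¹(B_r) ∩ 𝒳⁺} ω(v) dv + ∫_{h⁻¹(B_r) ∩ 𝒳⁻} ω(v) dv] / Leb(h⁻¹(B_r) ∩ 𝒳⁺) ≤ sup_{x ∈ 𝒳} ω(x). In particular the ratio defining the transformed weights is bounded uniformly in r, and sup_{x ∈ 𝒳} ω(x) is finite by the continuity of ω and the compactness of 𝒳. -/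

import Mathlib

open MeasureTheory Set Real

/-- Step 1 of the proof of Lemma 2: under the measure dominance condition (for
all Borel sets), the ratio defining the transformed weights at any matched point
`x ∈ 𝒳ₘ⁺` and radius `r > 0` lies between `0` and `sup_{x ∈ 𝒳} ω(x)`, and the
supremum is finite (`ω '' 𝒳` is bounded above) by continuity and compactness. -/
theorem transformed_weight_ratio_bounds
    (𝒳 : Set ℝ) (hcomp : IsCompact 𝒳) (ω g : ℝ → ℝ)
    (hω : ContinuousOn ω 𝒳) (hg : ContinuousOn g 𝒳)
    -- measure dominance condition for every Borel set B
    (hdom : ∀ B : Set ℝ, MeasurableSet B →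
      -∫ v in g ⁻¹' B ∩ {x ∈ 𝒳 | ω x < 0}, ω v
        ≤ ∫ v in g ⁻¹' B ∩ {x ∈ 𝒳 | 0 ≤ ω x}, ω v) :
    BddAbove (ω '' 𝒳) ∧
    ∀ x ∈ {x ∈ {x ∈ 𝒳 | 0 ≤ ω x} | ∃ z ∈ {x ∈ 𝒳 | ω x < 0}, g z = g x},
      ∀ r > (0:ℝ),
        0 < volume (g ⁻¹' (g '' (𝒳 ∩ Metric.closedBall x r)) ∩ {x ∈ 𝒳 | 0 ≤ ω x}) →
          0 ≤ ((∫ v in g ⁻¹' (g '' (𝒳 ∩ Metric.closedBall x r)) ∩ {x ∈ 𝒳 | 0 ≤ ω x}, ω v)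
                + ∫ v in g ⁻¹' (g '' (𝒳 ∩ Metric.closedBall x r)) ∩ {x ∈ 𝒳 | ω x < 0}, ω v)
              / (volume (g ⁻¹' (g '' (𝒳 ∩ Metric.closedBall x r)) ∩ {x ∈ 𝒳 | 0 ≤ ω x})).toReal ∧
          ((∫ v in g ⁻¹' (g '' (𝒳 ∩ Metric.closedBall x r)) ∩ {x ∈ 𝒳 | 0 ≤ ω x}, ω v)
                + ∫ v in g ⁻¹' (g '' (𝒳 ∩ Metric.closedBall x r)) ∩ {x ∈ 𝒳 | ω x < 0}, ω v)
              / (volume (g ⁻¹' (g '' (𝒳 ∩ Metric.closedBall x r)) ∩ {x ∈ 𝒳 | 0 ≤ ω x})).toReal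
            ≤ sSup (ω '' 𝒳) := by
  have himg : IsCompact (ω '' 𝒳) := hcomp.image_of_continuousOn hω
  have hbdd : BddAbove (ω '' 𝒳) := himg.bddAbove
  refine ⟨hbdd, ?_⟩
  rintro x ⟨⟨hx𝒳, hxω⟩, -⟩ r hr hpos
  set B : Set ℝ := g '' (𝒳 ∩ Metric.closedBall x r) with hB
  have hBcomp : IsCompact B :=
    (hcomp.inter_right Metric.isClosed_closedBall).image_of_continuousOn
      (hg.mono inter_subset_left)
  have hBmeas : MeasurableSet B := hBcomp.measurableSet
  -- the positive part set
  set P : Set ℝ := g ⁻¹' B ∩ {x ∈ 𝒳 | 0 ≤ ω x} with hP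
  set N : Set ℝ := g ⁻¹' B ∩ {x ∈ 𝒳 | ω x < 0} with hN
  have hKclosed : IsClosed (𝒳 ∩ g ⁻¹' B) :=
    hg.preimage_isClosed_of_isClosed hcomp.isClosed hBcomp.isClosed
  have hKcomp : IsCompact (𝒳 ∩ g ⁻¹' B) :=
    hcomp.of_isClosed_subset hKclosed inter_subset_left
  have hPωclosed : IsClosed (𝒳 ∩ ω ⁻¹' (Ici 0)) :=
    hω.preimage_isClosed_of_isClosed hcomp.isClosed isClosed_Ici
  have hPωcomp : IsCompact (𝒳 ∩ ω ⁻¹' (Ici 0)) :=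
    hcomp.of_isClosed_subset hPωclosed inter_subset_left
  have hPeq : P = (𝒳 ∩ g ⁻¹' B) ∩ (𝒳 ∩ ω ⁻¹' (Ici 0)) := by
    ext v; simp [hP, mem_Ici]; tauto
  have hNeq : N = (𝒳 ∩ g ⁻¹' B) ∩ (𝒳 \ (𝒳 ∩ ω ⁻¹' (Ici 0))) := by
    ext v
    simp only [hN, mem_inter_iff, mem_sep_iff, mem_preimage, mem_diff, mem_Ici]
    constructor
    · rintro ⟨h1, h2, h3⟩; exact ⟨⟨h2, h1⟩, h2, fun h => absurd h.2 (not_le.mpr h3)⟩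
    · rintro ⟨⟨h2, h1⟩, h3, h4⟩
      exact ⟨h1, h3, not_le.mp fun h => h4 ⟨h3, h⟩⟩
  have hPcomp : IsCompact P := by
    rw [hPeq]; exact hKcomp.inter_right hPωclosed
  have hPmeas : MeasurableSet P := hPcomp.measurableSet
  have hNmeas : MeasurableSet N := by
    rw [hNeq]
    exact hKcomp.measurableSet.inter
      (hcomp.measurableSet.diff hPωcomp.measurableSet)
  have hPsub : P ⊆ 𝒳 := fun v hv => hv.2.1
  have hNsub : N ⊆ 𝒳 := fun v hv => hv.2.1
  have hint𝒳 : IntegrableOn ω 𝒳 := hω.integrableOn_compact hcomp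
  have hintP : IntegrableOn ω P := hint𝒳.mono_set hPsub
  have hintN : IntegrableOn ω N := hint𝒳.mono_set hNsub
  have hnum : 0 ≤ (∫ v in P, ω v) + ∫ v in N, ω v := by
    have := hdom B hBmeas
    rw [← hP, ← hN] at this
    linarith
  have hvolP_ne_top : volume P ≠ ⊤ :=
    ne_of_lt (lt_of_le_of_lt (measure_mono hPsub)
      hcomp.measure_lt_top)
  have htoRealpos : 0 < (volume P).toReal :=
    ENNReal.toReal_pos (ne_of_gt hpos) hvolP_ne_top
  have hsSup_mem : ∀ v ∈ 𝒳, ω v ≤ sSup (ω '' 𝒳) := fun v hv =>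
    le_csSup hbdd ⟨v, hv, rfl⟩
  -- negative part integral is ≤ 0
  have hNneg : (∫ v in N, ω v) ≤ 0 := by
    apply setIntegral_nonpos hNmeas
    intro v hv
    exact le_of_lt hv.2.2
  -- positive part integral ≤ sSup * volume
  have hPbound : (∫ v in P, ω v) ≤ sSup (ω '' 𝒳) * (volume P).toReal := by
    have : (∫ v in P, ω v) ≤ ∫ _ in P, sSup (ω '' 𝒳) := by
      apply setIntegral_mono_on hintP (integrableOn_const hvolP_ne_top)
        hPmeas
      intro v hv
      exact hsSup_mem v (hPsub hv)
    simpa [setIntegral_const, mul_comm, measureReal_def] using this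
  constructor
  · exact div_nonneg hnum (le_of_lt htoRealpos)
  · rw [div_le_iff₀ htoRealpos]
    calc (∫ v in P, ω v) + ∫ v in N, ω v ≤ ∫ v in P, ω v := by linarith
      _ ≤ sSup (ω '' 𝒳) * (volume P).toReal := hPbound
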